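/- For every positive integer r, the optimal value of the level-2r Putinar moment relaxation equals the optimal value of the level-r Schmüdgen moment relaxation, i.e. val(P-DGW-2r) = val(S-DGW-r), and both values are at most DGW. -/

import Mathlib

open MvPolynomial

/-- The Riesz functional associated to a moment sequence `z`. -/
noncomputable def riesz {σ : Type*} (z : (σ →₀ ℕ) → ℝ) (p : MvPolynomial σ ℝ) : ℝ :=
  ∑ α ∈ p.support, MvPolynomial.coeff α p * z α

/-- The total degree (length) of a multi-index. -/
def mdeg {σ : Type*} (α : σ →₀ ℕ) : ℕ := α.sum fun _ e => e

/-- Positive semidefiniteness of the truncated localizing matrix `M_t(g z)`: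
the associated quadratic form is nonnegative on coefficient vectors of
polynomials of degree at most `t`. -/
def locPSD {σ : Type*} (z : (σ →₀ ℕ) → ℝ) (g : MvPolynomial σ ℝ) (t : ℕ) : Prop :=
  ∀ p : MvPolynomial σ ℝ, p.totalDegree ≤ t → 0 ≤ riesz z (g * p ^ 2)

/-- Vanishing of the truncated localizing matrix `M_t(g z)`: all entries are zero. -/
def locZero {σ : Type*} (z : (σ →₀ ℕ) → ℝ) (g : MvPolynomial σ ℝ) (t : ℕ) : Prop :=
  ∀ α β : σ →₀ ℕ, mdeg α ≤ t → mdeg β ≤ t →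
    riesz z (g * monomial α 1 * monomial β 1) = 0

/-- The row-marginal polynomial `r_i(π) = ∑_j π_{ij} - μ_i`. -/
noncomputable def rowPoly (a b : ℕ) (μ : Fin a → ℝ) (i : Fin a) :
    MvPolynomial (Fin a × Fin b) ℝ :=
  (∑ j, X (i, j)) - C (μ i)

/-- The column-marginal polynomial `c_j(π) = ∑_i π_{ij} - ν_j`. -/
noncomputable def colPoly (a b : ℕ) (ν : Fin b → ℝ) (j : Fin b) :
    MvPolynomial (Fin a × Fin b) ℝ :=
  (∑ i, X (i, j)) - C (ν j)

/-- The monomial `e_I = ∏_{(i,j) ∈ I} π_{ij}`. -/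
noncomputable def eI {a b : ℕ} (I : Finset (Fin a × Fin b)) : MvPolynomial (Fin a × Fin b) ℝ :=
  ∏ q ∈ I, X q

/-- A probability vector: nonnegative entries summing to 1. -/
def IsProbVec {a : ℕ} (μ : Fin a → ℝ) : Prop := (∀ i, 0 ≤ μ i) ∧ ∑ i, μ i = 1

/-- Feasibility for the level-`r` Schmüdgen moment relaxation (S-DGW-r). -/
def SFeas (a b r : ℕ) (μ : Fin a → ℝ) (ν : Fin b → ℝ)
    (z : ((Fin a × Fin b) →₀ ℕ) → ℝ) : Prop :=
  z 0 = 1 ∧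
  (∀ I : Finset (Fin a × Fin b), I.card ≤ 2 * r → locPSD z (eI I) (r - (I.card + 1) / 2)) ∧
  (∀ i, locZero z (rowPoly a b μ i) (r - 1)) ∧
  (∀ j, locZero z (colPoly a b ν j) (r - 1)) ∧
  (∀ i₁ i₂ : Fin a, ∀ j : Fin b, locZero z (rowPoly a b μ i₁ * X (i₂, j)) (r - 1)) ∧
  (∀ j₁ j₂ : Fin b, ∀ i : Fin a, locZero z (colPoly a b ν j₁ * X (i, j₂)) (r - 1))

/-- The objective of the Schmüdgen moment relaxation. -/
noncomputable def objS (a b : ℕ) (L : Fin a → Fin b → Fin a → Fin b → ℝ)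
    (z : ((Fin a × Fin b) →₀ ℕ) → ℝ) : ℝ :=
  ∑ i, ∑ j, ∑ k, ∑ l, L i j k l * z (Finsupp.single (i, j) 1 + Finsupp.single (k, l) 1)

/-- The optimal value of the level-`r` Schmüdgen moment relaxation. -/
noncomputable def valS (a b r : ℕ) (μ : Fin a → ℝ) (ν : Fin b → ℝ)
    (L : Fin a → Fin b → Fin a → Fin b → ℝ) : ℝ :=
  sInf {v : ℝ | ∃ z, SFeas a b r μ ν z ∧ v = objS a b L z}

/-- Feasibility for the level-`s` Putinar moment relaxation (P-DGW-s), in squared variables. -/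
def PFeas (a b s : ℕ) (μ : Fin a → ℝ) (ν : Fin b → ℝ)
    (z : ((Fin a × Fin b) →₀ ℕ) → ℝ) : Prop :=
  z 0 = 1 ∧ locPSD z 1 s ∧
  (∀ i, locZero z (C (μ i) - ∑ j, X (i, j) ^ 2) (s - 1)) ∧
  (∀ j, locZero z (C (ν j) - ∑ i, X (i, j) ^ 2) (s - 1))

/-- The objective of the Putinar moment relaxation. -/
noncomputable def objP (a b : ℕ) (L : Fin a → Fin b → Fin a → Fin b → ℝ)
    (z : ((Fin a × Fin b) →₀ ℕ) → ℝ) : ℝ :=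
  ∑ i, ∑ j, ∑ k, ∑ l, L i j k l * z (Finsupp.single (i, j) 2 + Finsupp.single (k, l) 2)

/-- The optimal value of the level-`s` Putinar moment relaxation. -/
noncomputable def valP (a b s : ℕ) (μ : Fin a → ℝ) (ν : Fin b → ℝ)
    (L : Fin a → Fin b → Fin a → Fin b → ℝ) : ℝ :=
  sInf {v : ℝ | ∃ z, PFeas a b s μ ν z ∧ v = objP a b L z}

/-- The transport polytope `Π(μ,ν)`. -/
def transportPolytope (a b : ℕ) (μ : Fin a → ℝ) (ν : Fin b → ℝ) : Set (Fin a → Fin b → ℝ) :=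
  {π | (∀ i j, 0 ≤ π i j) ∧ (∀ i, ∑ j, π i j = μ i) ∧ (∀ j, ∑ i, π i j = ν j)}

/-- The quadratic Gromov-Wasserstein objective `L(π)`. -/
noncomputable def Lquad (a b : ℕ) (L : Fin a → Fin b → Fin a → Fin b → ℝ)
    (π : Fin a → Fin b → ℝ) : ℝ :=
  ∑ i, ∑ j, ∑ k, ∑ l, L i j k l * π i j * π k l

/-- The optimal value of the discrete Gromov-Wasserstein problem (DGW). -/
noncomputable def DGW (a b : ℕ) (μ : Fin a → ℝ) (ν : Fin b → ℝ)
    (L : Fin a → Fin b → Fin a → Fin b → ℝ) : ℝ :=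
  sInf {v : ℝ | ∃ π ∈ transportPolytope a b μ ν, v = Lquad a b L π}

section basic
variable {σ : Type*}

lemma riesz_eq_sum (z : (σ →₀ ℕ) → ℝ) (p : MvPolynomial σ ℝ) :
    riesz z p = (AddMonoidAlgebra.coeff p).sum (fun α c => c * z α) := rfl

noncomputable def rieszAM (z : (σ →₀ ℕ) → ℝ) : MvPolynomial σ ℝ →+ ℝ :=
  (Finsupp.liftAddHom (fun α => AddMonoidHom.mulRight (z α))).comp
    AddMonoidAlgebra.coeffAddEquiv.toAddMonoidHom

lemma riesz_eq_AM (z : (σ →₀ ℕ) → ℝ) (p : MvPolynomial σ ℝ) :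
    riesz z p = rieszAM z p := by
  rw [riesz_eq_sum]
  simp only [rieszAM, AddMonoidHom.comp_apply, Finsupp.liftAddHom_apply]
  rfl

lemma riesz_add (z : (σ →₀ ℕ) → ℝ) (p q : MvPolynomial σ ℝ) :
    riesz z (p + q) = riesz z p + riesz z q := by
  simp [riesz_eq_AM]

lemma riesz_sum (z : (σ →₀ ℕ) → ℝ) {ι : Type*} (s : Finset ι) (f : ι → MvPolynomial σ ℝ) :
    riesz z (∑ i ∈ s, f i) = ∑ i ∈ s, riesz z (f i) := by
  simp [riesz_eq_AM]

lemma riesz_monomial (z : (σ →₀ ℕ) → ℝ) (α : σ →₀ ℕ) (c : ℝ) :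
    riesz z (monomial α c) = c * z α := by
  rw [riesz_eq_AM, rieszAM]
  show Finsupp.liftAddHom _ (Finsupp.single α c) = _
  simp

lemma riesz_neg (z : (σ →₀ ℕ) → ℝ) (p : MvPolynomial σ ℝ) :
    riesz z (-p) = - riesz z p := by
  simp [riesz_eq_AM]

end basic

section expand2
variable {σ : Type*}

lemma expand_two_monomial (d : σ →₀ ℕ) (c : ℝ) :
    expand 2 (monomial d c) = monomial (d + d) (c : ℝ) := by
  classical
  rw [expand_monomial, two_nsmul]

lemma riesz_expand (z : (σ →₀ ℕ) → ℝ) (p : MvPolynomial σ ℝ) :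
    riesz z (expand 2 p) = riesz (fun α => z (α + α)) p := by
  induction p using MvPolynomial.induction_on' with
  | monomial α c => rw [expand_two_monomial, riesz_monomial, riesz_monomial]
  | add p q hp hq => rw [map_add, riesz_add, riesz_add, hp, hq]

lemma mdeg_add (α β : σ →₀ ℕ) : mdeg (α + β) = mdeg α + mdeg β := by
  classical
  exact Finsupp.sum_add_index' (fun _ => rfl) (fun _ _ _ => rfl)

lemma mdeg_single (q : σ) (k : ℕ) : mdeg (Finsupp.single q k) = k := by
  simp [mdeg, Finsupp.sum_single_index]

lemma mdeg_zero : mdeg (0 : σ →₀ ℕ) = 0 := by simp [mdeg]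

lemma totalDegree_monomial_le' (d : σ →₀ ℕ) (c : ℝ) :
    (monomial d c).totalDegree ≤ mdeg d := by
  classical
  by_cases hc : c = 0
  · simp [hc]
  · rw [totalDegree_monomial _ hc]; exact le_rfl

lemma totalDegree_expand_le (p : MvPolynomial σ ℝ) :
    (expand 2 p).totalDegree ≤ 2 * p.totalDegree := by
  classical
  conv_lhs => rw [← support_sum_monomial_coeff p]
  rw [map_sum]
  apply totalDegree_finsetSum_le
  intro α hα
  rw [expand_two_monomial]
  refine (totalDegree_monomial_le' _ _).trans ?_
  rw [mdeg_add]
  have h2 : mdeg α ≤ p.totalDegree := le_totalDegree hα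
  omega

end expand2

section parity
variable {σ : Type*} [DecidableEq σ]

noncomputable def indF (E : Finset σ) : σ →₀ ℕ := ∑ q ∈ E, Finsupp.single q 1

lemma indF_apply (E : Finset σ) (q : σ) : indF E q = if q ∈ E then 1 else 0 := by
  classical
  rw [indF, Finset.sum_apply']
  simp only [Finsupp.single_apply]
  rw [Finset.sum_ite_eq']

lemma mdeg_indF (E : Finset σ) : mdeg (indF E) = E.card := by
  classical
  induction E using Finset.cons_induction with
  | empty => simp [indF, mdeg]
  | cons a s has ih =>
      rw [indF, Finset.sum_cons, mdeg_add, ← indF, ih, mdeg_single, Finset.card_cons]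
      omega

lemma prodX_eq_monomial (E : Finset σ) :
    (∏ q ∈ E, (X q : MvPolynomial σ ℝ)) = monomial (indF E) 1 := by
  classical
  induction E using Finset.cons_induction with
  | empty => simp [indF, monomial_zero']
  | cons a s has ih =>
      have hins : indF (Finset.cons a s has) = Finsupp.single a 1 + indF s :=
        Finset.sum_cons has
      rw [Finset.prod_cons, ih, X, monomial_mul, one_mul, hins]

noncomputable def hf (α : σ →₀ ℕ) : σ →₀ ℕ := α.mapRange (· / 2) (Nat.zero_div 2)

lemma hf_apply (α : σ →₀ ℕ) (q : σ) : hf α q = α q / 2 := Finsupp.mapRange_apply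

lemma hf_dbl (β : σ →₀ ℕ) : hf (β + β) = β := by
  ext q; rw [hf_apply, Finsupp.add_apply]; omega

def par (α : σ →₀ ℕ) : Finset σ := α.support.filter (fun q => α q % 2 = 1)

lemma mem_par {α : σ →₀ ℕ} {q : σ} : q ∈ par α ↔ α q % 2 = 1 := by
  simp only [par, Finset.mem_filter, Finsupp.mem_support_iff]
  constructor
  · exact fun h => h.2
  · intro h; exact ⟨by omega, h⟩

lemma decomp (α : σ →₀ ℕ) : indF (par α) + (hf α + hf α) = α := by
  ext q
  rw [Finsupp.add_apply, Finsupp.add_apply, indF_apply, hf_apply]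
  by_cases h : q ∈ par α
  · rw [if_pos h]; have := mem_par.mp h; omega
  · rw [if_neg h]
    have : ¬ (α q % 2 = 1) := fun hc => h (mem_par.mpr hc)
    omega

lemma mdeg_decomp (α : σ →₀ ℕ) : mdeg α = (par α).card + 2 * mdeg (hf α) := by
  conv_lhs => rw [← decomp α]
  rw [mdeg_add, mdeg_add, mdeg_indF]
  omega

lemma par_add (α β : σ →₀ ℕ) {q : σ} :
    q ∈ par (α + β) ↔ ((q ∈ par α) ↔ ¬ (q ∈ par β)) := by
  simp only [mem_par, Finsupp.add_apply]
  omega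

lemma exists_peel {α : σ →₀ ℕ} (h : α ≠ 0) :
    ∃ q β, α = Finsupp.single q 1 + β := by
  obtain ⟨q, hq⟩ := Finsupp.support_nonempty_iff.mpr h
  refine ⟨q, α - Finsupp.single q 1, ?_⟩
  have hq1 : 1 ≤ α q := by
    have := Finsupp.mem_support_iff.mp hq; omega
  ext x
  rw [Finsupp.add_apply, Finsupp.tsub_apply, Finsupp.single_apply]
  by_cases hx : q = x
  · subst hx; simp; omega
  · simp [hx]

lemma mdeg_eq_zero {α : σ →₀ ℕ} (h : mdeg α = 0) : α = 0 := by
  by_contra hne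
  obtain ⟨q, β, hqb⟩ := exists_peel hne
  rw [hqb, mdeg_add, mdeg_single] at h
  omega

lemma split_aux (t : ℕ) : ∀ k (τ : σ →₀ ℕ), mdeg τ = k →
    ∃ a b : σ →₀ ℕ, a + b = τ ∧ mdeg a = min k t ∧ mdeg b = k - min k t := by
  intro k
  induction k with
  | zero =>
      intro τ hτ
      exact ⟨0, 0, by rw [add_zero]; exact (mdeg_eq_zero hτ).symm, by simp [mdeg_zero], by simp [mdeg_zero]⟩
  | succ k ih =>
      intro τ hτ
      have hne : τ ≠ 0 := fun h => by simp [h, mdeg_zero] at hτ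
      obtain ⟨q, β, hqb⟩ := exists_peel hne
      have hβ : mdeg β = k := by
        have := hτ; rw [hqb, mdeg_add, mdeg_single] at this; omega
      obtain ⟨a', b', hab, ha, hb⟩ := ih β hβ
      by_cases hk : k < t
      · refine ⟨Finsupp.single q 1 + a', b', ?_, ?_, ?_⟩
        · rw [add_assoc, hab, hqb]
        · rw [mdeg_add, mdeg_single, ha]; omega
        · rw [hb]; omega
      · refine ⟨a', Finsupp.single q 1 + b', ?_, ?_, ?_⟩
        · rw [add_left_comm, hab, hqb]
        · rw [ha]; omega
        · rw [mdeg_add, mdeg_single, hb]; omega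

lemma split_le {τ : σ →₀ ℕ} {t : ℕ} (h : mdeg τ ≤ 2 * t) :
    ∃ a b : σ →₀ ℕ, a + b = τ ∧ mdeg a ≤ t ∧ mdeg b ≤ t := by
  obtain ⟨a, b, hab, ha, hb⟩ := split_aux t (mdeg τ) τ rfl
  exact ⟨a, b, hab, by omega, by omega⟩

end parity

section dzsec
variable {σ : Type*} [DecidableEq σ]

open Classical in
noncomputable def dz (z : (σ →₀ ℕ) → ℝ) (α : σ →₀ ℕ) : ℝ :=
  if hf α + hf α = α then z (hf α) else 0

lemma dz_dbl (z : (σ →₀ ℕ) → ℝ) (β : σ →₀ ℕ) : dz z (β + β) = z β := by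
  rw [dz, if_pos (by rw [hf_dbl]), hf_dbl]

lemma dz_of_odd (z : (σ →₀ ℕ) → ℝ) {α : σ →₀ ℕ} {q : σ} (h : α q % 2 = 1) :
    dz z α = 0 := by
  rw [dz, if_neg]
  intro hc
  have := congrArg (fun f : σ →₀ ℕ => f q) hc
  simp only [Finsupp.add_apply, hf_apply] at this
  omega

lemma riesz_zero (z : (σ →₀ ℕ) → ℝ) : riesz z 0 = 0 := by
  simp [riesz_eq_AM]

lemma riesz_eq_zero_of_support (z : (σ →₀ ℕ) → ℝ) (P : MvPolynomial σ ℝ)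
    (h : ∀ α ∈ P.support, z α = 0) : riesz z P = 0 := by
  rw [riesz]
  apply Finset.sum_eq_zero
  intro α hα
  rw [h α hα, mul_zero]

lemma riesz_dz_sq [Fintype σ] (z : (σ →₀ ℕ) → ℝ) (r : ℕ)
    (hS : ∀ E : Finset σ, E.card ≤ 2 * r →
      ∀ p : MvPolynomial σ ℝ, p.totalDegree ≤ r - (E.card + 1) / 2 →
        0 ≤ riesz z ((∏ q ∈ E, X q) * p ^ 2))
    (p : MvPolynomial σ ℝ) (hp : p.totalDegree ≤ 2 * r) :
    0 ≤ riesz (dz z) (p ^ 2) := by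
  classical
  set pE : Finset σ → MvPolynomial σ ℝ :=
    fun E => ∑ α ∈ p.support.filter (fun α => par α = E), monomial α (coeff α p) with hpE
  have hdecomp : ∑ E : Finset σ, pE E = p := by
    rw [hpE]
    rw [Finset.sum_fiberwise_of_maps_to (fun x _ => Finset.mem_univ (par x))]
    exact support_sum_monomial_coeff p
  have hsupp_pE : ∀ E, ∀ γ ∈ (pE E).support, par γ = E := by
    intro E γ hγ
    have := MvPolynomial.support_sum hγ
    obtain ⟨α, hα, hγα⟩ := Finset.mem_biUnion.mp this
    have := MvPolynomial.support_monomial_subset hγα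
    rw [Finset.mem_singleton] at this
    subst this
    exact (Finset.mem_filter.mp hα).2
  have key : p ^ 2 = ∑ E : Finset σ, ∑ E' : Finset σ, pE E * pE E' := by
    rw [pow_two, ← hdecomp, Finset.sum_mul_sum]
  rw [key, riesz_sum]
  apply Finset.sum_nonneg
  intro E _
  rw [riesz_sum]
  apply Finset.sum_nonneg
  intro E' _
  by_cases hEE : E = E'
  · -- diagonal case
    subst hEE
    by_cases hemp : p.support.filter (fun α => par α = E) = ∅
    · have h0 : pE E = 0 := by simp only [hpE, hemp, Finset.sum_empty]
      rw [h0, mul_zero, riesz_zero]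
    · obtain ⟨α₀, hα₀⟩ := Finset.nonempty_of_ne_empty hemp
      have hα₀s : α₀ ∈ p.support := (Finset.mem_filter.mp hα₀).1
      have hα₀E : par α₀ = E := (Finset.mem_filter.mp hα₀).2
      have hcard : E.card ≤ 2 * r := by
        have h1 : mdeg α₀ = (par α₀).card + 2 * mdeg (hf α₀) := mdeg_decomp α₀
        have h2 : mdeg α₀ ≤ p.totalDegree := le_totalDegree hα₀s
        rw [hα₀E] at h1
        omega
      set qE : MvPolynomial σ ℝ :=
        ∑ α ∈ p.support.filter (fun α => par α = E), monomial (hf α) (coeff α p) with hqE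
      have hrep : pE E = monomial (indF E) 1 * expand 2 qE := by
        rw [hqE, map_sum, Finset.mul_sum]
        simp only [hpE]
        apply Finset.sum_congr rfl
        intro α hα
        have hd : indF E + (hf α + hf α) = α := by
          rw [← (Finset.mem_filter.mp hα).2]; exact decomp α
        rw [expand_two_monomial, monomial_mul, one_mul, hd]
      have hmm : (monomial (indF E) 1 : MvPolynomial σ ℝ) * monomial (indF E) 1
          = monomial (indF E + indF E) 1 := by rw [monomial_mul, one_mul]
      have hprod : pE E * pE E = expand 2 ((∏ q ∈ E, X q) * qE ^ 2) := by
        rw [map_mul, map_pow, prodX_eq_monomial, expand_two_monomial, hrep, ← hmm]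
        ring
      rw [hprod, riesz_expand]
      have hfun : (fun α => dz z (α + α)) = z := funext (dz_dbl z)
      rw [hfun]
      apply hS E hcard
      rw [hqE]
      apply totalDegree_finsetSum_le
      intro α hα
      refine (totalDegree_monomial_le' _ _).trans ?_
      have h1 : mdeg α = (par α).card + 2 * mdeg (hf α) := mdeg_decomp α
      have h2 : mdeg α ≤ p.totalDegree := le_totalDegree (Finset.mem_filter.mp hα).1
      rw [(Finset.mem_filter.mp hα).2] at h1
      omega
  · -- off-diagonal
    have hq : ∃ q, ¬ (q ∈ E ↔ q ∈ E') := by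
      by_contra hc
      push_neg at hc
      exact hEE (Finset.ext fun q => (hc q))
    obtain ⟨q, hq⟩ := hq
    have : riesz (dz z) (pE E * pE E') = 0 := by
      apply riesz_eq_zero_of_support
      intro γ hγ
      have := MvPolynomial.support_mul _ _ hγ
      rw [Finset.mem_add] at this
      obtain ⟨a, ha, b, hb, rfl⟩ := this
      have hpa : par a = E := hsupp_pE E a ha
      have hpb : par b = E' := hsupp_pE E' b hb
      have hodd : (a + b) q % 2 = 1 := by
        rw [Finsupp.add_apply]
        have h1 : (q ∈ E) ↔ (a q % 2 = 1) := by rw [← hpa]; exact mem_par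
        have h2 : (q ∈ E') ↔ (b q % 2 = 1) := by rw [← hpb]; exact mem_par
        have h3 : ¬ ((a q % 2 = 1) ↔ (b q % 2 = 1)) :=
          fun hc => hq ((h1.trans hc).trans h2.symm)
        omega
      exact dz_of_odd z hodd
    rw [this]

end dzsec


section glue
variable {σ : Type*} [DecidableEq σ]

lemma mono_mul_mono (a b : σ →₀ ℕ) :
    (monomial a 1 : MvPolynomial σ ℝ) * monomial b 1 = monomial (a + b) 1 := by
  rw [monomial_mul, one_mul]

lemma riesz_sub (z : (σ →₀ ℕ) → ℝ) (p q : MvPolynomial σ ℝ) :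
    riesz z (p - q) = riesz z p - riesz z q := by
  simp [riesz_eq_AM]

lemma locZero_apply {z : (σ →₀ ℕ) → ℝ} {g : MvPolynomial σ ℝ} {t : ℕ}
    (h : locZero z g t) {τ : σ →₀ ℕ} (hτ : mdeg τ ≤ 2 * t) :
    riesz z (g * monomial τ 1) = 0 := by
  obtain ⟨a, b, hab, ha, hb⟩ := split_le hτ
  have h2 := h a b ha hb
  rwa [mul_assoc, mono_mul_mono, hab] at h2

lemma locZero_of {z : (σ →₀ ℕ) → ℝ} {g : MvPolynomial σ ℝ} {t : ℕ}
    (h : ∀ τ : σ →₀ ℕ, mdeg τ ≤ 2 * t → riesz z (g * monomial τ 1) = 0) :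
    locZero z g t := by
  intro α β hα hβ
  rw [mul_assoc, mono_mul_mono]
  exact h _ (by rw [mdeg_add]; omega)

end glue

section mn
variable {m n : ℕ} {μ : Fin m → ℝ} {ν : Fin n → ℝ}

lemma riesz_rowPoly_mul (z : ((Fin m × Fin n) →₀ ℕ) → ℝ) (i : Fin m)
    (τ : (Fin m × Fin n) →₀ ℕ) :
    riesz z (rowPoly m n μ i * monomial τ 1)
      = (∑ j, z (Finsupp.single (i, j) 1 + τ)) - μ i * z τ := by
  rw [rowPoly, sub_mul, Finset.sum_mul, riesz_sub, riesz_sum, C_mul_monomial, riesz_monomial,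
    mul_one]
  congr 1
  apply Finset.sum_congr rfl
  intro j _
  rw [X, mono_mul_mono, riesz_monomial, one_mul]

lemma riesz_colPoly_mul (z : ((Fin m × Fin n) →₀ ℕ) → ℝ) (j : Fin n)
    (τ : (Fin m × Fin n) →₀ ℕ) :
    riesz z (colPoly m n ν j * monomial τ 1)
      = (∑ i, z (Finsupp.single (i, j) 1 + τ)) - ν j * z τ := by
  rw [colPoly, sub_mul, Finset.sum_mul, riesz_sub, riesz_sum, C_mul_monomial, riesz_monomial,
    mul_one]
  congr 1
  apply Finset.sum_congr rfl
  intro i _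
  rw [X, mono_mul_mono, riesz_monomial, one_mul]

lemma riesz_putRow_mul (w : ((Fin m × Fin n) →₀ ℕ) → ℝ) (i : Fin m)
    (γ : (Fin m × Fin n) →₀ ℕ) :
    riesz w ((C (μ i) - ∑ j, X (i, j) ^ 2) * monomial γ 1)
      = μ i * w γ
        - ∑ j, w (Finsupp.single (i, j) 1 + Finsupp.single (i, j) 1 + γ) := by
  rw [sub_mul, Finset.sum_mul, riesz_sub, riesz_sum, C_mul_monomial, riesz_monomial, mul_one]
  congr 1
  apply Finset.sum_congr rfl
  intro j _
  rw [pow_two, X, mono_mul_mono, mono_mul_mono, riesz_monomial, one_mul]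

lemma riesz_putCol_mul (w : ((Fin m × Fin n) →₀ ℕ) → ℝ) (j : Fin n)
    (γ : (Fin m × Fin n) →₀ ℕ) :
    riesz w ((C (ν j) - ∑ i, X (i, j) ^ 2) * monomial γ 1)
      = ν j * w γ
        - ∑ i, w (Finsupp.single (i, j) 1 + Finsupp.single (i, j) 1 + γ) := by
  rw [sub_mul, Finset.sum_mul, riesz_sub, riesz_sum, C_mul_monomial, riesz_monomial, mul_one]
  congr 1
  apply Finset.sum_congr rfl
  intro i _
  rw [pow_two, X, mono_mul_mono, mono_mul_mono, riesz_monomial, one_mul]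

lemma row_sum_eq {r : ℕ} (hr : 0 < r) {z : ((Fin m × Fin n) →₀ ℕ) → ℝ}
    (hz : SFeas m n r μ ν z) (i : Fin m) {τ : (Fin m × Fin n) →₀ ℕ}
    (hτ : mdeg τ ≤ 2 * r - 1) :
    ∑ j, z (Finsupp.single (i, j) 1 + τ) = μ i * z τ := by
  have key : riesz z (rowPoly m n μ i * monomial τ 1) = 0 := by
    by_cases h0 : τ = 0
    · subst h0
      exact locZero_apply (hz.2.2.1 i) (by rw [mdeg_zero]; omega)
    · obtain ⟨q, τ', hqτ⟩ := exists_peel h0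
      have hτ' : mdeg τ' ≤ 2 * (r - 1) := by
        have := hτ; rw [hqτ, mdeg_add, mdeg_single] at this; omega
      have h2 := locZero_apply (hz.2.2.2.2.1 i q.1 q.2) hτ'
      rw [mul_assoc (rowPoly m n μ i), X, mono_mul_mono, ← hqτ] at h2
      exact h2
  rw [riesz_rowPoly_mul] at key
  linarith [key]

lemma col_sum_eq {r : ℕ} (hr : 0 < r) {z : ((Fin m × Fin n) →₀ ℕ) → ℝ}
    (hz : SFeas m n r μ ν z) (j : Fin n) {τ : (Fin m × Fin n) →₀ ℕ}
    (hτ : mdeg τ ≤ 2 * r - 1) :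
    ∑ i, z (Finsupp.single (i, j) 1 + τ) = ν j * z τ := by
  have key : riesz z (colPoly m n ν j * monomial τ 1) = 0 := by
    by_cases h0 : τ = 0
    · subst h0
      exact locZero_apply (hz.2.2.2.1 j) (by rw [mdeg_zero]; omega)
    · obtain ⟨q, τ', hqτ⟩ := exists_peel h0
      have hτ' : mdeg τ' ≤ 2 * (r - 1) := by
        have := hτ; rw [hqτ, mdeg_add, mdeg_single] at this; omega
      have h2 := locZero_apply (hz.2.2.2.2.2 j q.2 q.1) hτ'
      rw [mul_assoc (colPoly m n ν j), X, mono_mul_mono, ← hqτ] at h2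
      exact h2
  rw [riesz_colPoly_mul] at key
  linarith [key]

end mn


section bounds
variable {m n r : ℕ} {μ : Fin m → ℝ} {ν : Fin n → ℝ} {z : ((Fin m × Fin n) →₀ ℕ) → ℝ}

lemma pair_nonneg (hr : 0 < r) (hz : SFeas m n r μ ν z) (a b : Fin m × Fin n) :
    0 ≤ z (Finsupp.single a 1 + Finsupp.single b 1) := by
  by_cases hab : a = b
  · subst hab
    have h := hz.2.1 ∅ (by simp) (X a) (by
      rw [totalDegree_X]; simp; omega)
    rwa [eI, Finset.prod_empty, one_mul, pow_two, X, mono_mul_mono, riesz_monomial,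
      one_mul] at h
  · have h := hz.2.1 {a, b} (by
      have : ({a, b} : Finset (Fin m × Fin n)).card ≤ 2 := Finset.card_insert_le _ _ |>.trans (by simp)
      omega) 1 (by simp)
    rwa [eI, Finset.prod_pair hab, one_pow, mul_one, X, X, mono_mul_mono, riesz_monomial,
      one_mul] at h

lemma single_nonneg (hr : 0 < r) (hz : SFeas m n r μ ν z) (a : Fin m × Fin n) :
    0 ≤ z (Finsupp.single a 1) := by
  have h := hz.2.1 {a} (by simp; omega) 1 (by simp)
  rwa [eI, Finset.prod_singleton, one_pow, mul_one, X, riesz_monomial, one_mul] at h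

lemma probvec_le_one {a : ℕ} {μ : Fin a → ℝ} (hμ : IsProbVec μ) (i : Fin a) : μ i ≤ 1 := by
  rw [← hμ.2]
  exact Finset.single_le_sum (fun k _ => hμ.1 k) (Finset.mem_univ i)

lemma single_le_one (hr : 0 < r) (hμ : IsProbVec μ) (hz : SFeas m n r μ ν z)
    (a : Fin m × Fin n) : z (Finsupp.single a 1) ≤ 1 := by
  have hsum := row_sum_eq hr hz a.1 (τ := 0) (by rw [mdeg_zero]; omega)
  rw [hz.1, mul_one] at hsum
  have h1 : z (Finsupp.single a 1) ≤ μ a.1 := by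
    rw [← hsum]
    have := Finset.single_le_sum
      (f := fun j => z (Finsupp.single (a.1, j) 1 + 0))
      (fun j _ => by
        show (0:ℝ) ≤ z (Finsupp.single (a.1, j) 1 + 0)
        rw [add_zero]; exact single_nonneg hr hz _) (Finset.mem_univ a.2)
    simpa using this
  exact h1.trans (probvec_le_one hμ a.1)

lemma pair_le_one (hr : 0 < r) (hμ : IsProbVec μ) (hz : SFeas m n r μ ν z)
    (a b : Fin m × Fin n) : z (Finsupp.single a 1 + Finsupp.single b 1) ≤ 1 := by
  have hsum := row_sum_eq hr hz a.1 (τ := Finsupp.single b 1)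
    (by rw [mdeg_single]; omega)
  have h1 : z (Finsupp.single a 1 + Finsupp.single b 1) ≤ μ a.1 * z (Finsupp.single b 1) := by
    rw [← hsum]
    exact Finset.single_le_sum
      (f := fun j => z (Finsupp.single (a.1, j) 1 + Finsupp.single b 1))
      (fun j _ => pair_nonneg hr hz (a.1, j) b) (Finset.mem_univ a.2)
  refine h1.trans ?_
  have h2 := single_nonneg hr hz b
  have h3 := single_le_one hr hμ hz b
  have h4 := hμ.1 a.1
  have h5 := probvec_le_one hμ a.1
  nlinarith

lemma objS_lb (hr : 0 < r) (hμ : IsProbVec μ) (hz : SFeas m n r μ ν z)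
    (L : Fin m → Fin n → Fin m → Fin n → ℝ) :
    -(∑ i, ∑ j, ∑ k, ∑ l, |L i j k l|) ≤ objS m n L z := by
  rw [objS, ← Finset.sum_neg_distrib]
  apply Finset.sum_le_sum; intro i _
  rw [← Finset.sum_neg_distrib]
  apply Finset.sum_le_sum; intro j _
  rw [← Finset.sum_neg_distrib]
  apply Finset.sum_le_sum; intro k _
  rw [← Finset.sum_neg_distrib]
  apply Finset.sum_le_sum; intro l _
  have h1 := pair_nonneg hr hz (i, j) (k, l)
  have h2 := pair_le_one hr hμ hz (i, j) (k, l)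
  have e1 : 0 ≤ (|L i j k l| + L i j k l) * z (Finsupp.single (i, j) 1 + Finsupp.single (k, l) 1) :=
    mul_nonneg (by linarith [neg_abs_le (L i j k l)]) h1
  have e2 : 0 ≤ |L i j k l| * (1 - z (Finsupp.single (i, j) 1 + Finsupp.single (k, l) 1)) :=
    mul_nonneg (abs_nonneg _) (by linarith)
  nlinarith [e1, e2]

end bounds


section translate
variable {m n r : ℕ} {μ : Fin m → ℝ} {ν : Fin n → ℝ}

lemma XX_mono {σ : Type*} [DecidableEq σ] (q : σ) (a : σ →₀ ℕ) :
    (X q : MvPolynomial σ ℝ) ^ 2 * monomial a 1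
      = monomial (Finsupp.single q 1 + Finsupp.single q 1 + a) 1 := by
  rw [pow_two, X, mono_mul_mono, mono_mul_mono]

lemma expand_rowPoly (i : Fin m) :
    expand 2 (rowPoly m n μ i) = -(C (μ i) - ∑ j, X (i, j) ^ 2) := by
  rw [rowPoly, map_sub, map_sum]
  simp only [expand_X, expand_C]
  ring

lemma expand_colPoly (j : Fin n) :
    expand 2 (colPoly m n ν j) = -(C (ν j) - ∑ i, X (i, j) ^ 2) := by
  rw [colPoly, map_sub, map_sum]
  simp only [expand_X, expand_C]
  ring

lemma single_two (q : Fin m × Fin n) :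
    (Finsupp.single q 2 : (Fin m × Fin n) →₀ ℕ) = Finsupp.single q 1 + Finsupp.single q 1 := by
  rw [← Finsupp.single_add]

lemma PtoS (hr : 0 < r) {zt : ((Fin m × Fin n) →₀ ℕ) → ℝ}
    (h : PFeas m n (2 * r) μ ν zt) :
    SFeas m n r μ ν (fun α => zt (α + α)) := by
  obtain ⟨h0, hpsd, hrow, hcol⟩ := h
  refine ⟨by simpa using h0, ?_, ?_, ?_, ?_, ?_⟩
  · -- locPSD
    intro I hI p hp
    show 0 ≤ riesz (fun α => zt (α + α)) (eI I * p ^ 2)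
    rw [← riesz_expand]
    have hexp : expand 2 (eI I * p ^ 2) = 1 * (eI I * expand 2 p) ^ 2 := by
      rw [map_mul, map_pow, eI, map_prod]
      simp only [expand_X]
      rw [Finset.prod_pow]
      ring
    rw [hexp]
    apply hpsd
    refine (totalDegree_mul _ _).trans ?_
    have h1 : (eI I).totalDegree ≤ I.card := by
      rw [eI]
      refine (totalDegree_finset_prod _ _).trans ?_
      simp [totalDegree_X]
    have h2 : (expand 2 p).totalDegree ≤ 2 * p.totalDegree := totalDegree_expand_le p
    have h3 := hp
    omega
  · -- row
    intro i
    apply locZero_of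
    intro τ hτ
    show riesz (fun α => zt (α + α)) (rowPoly m n μ i * monomial τ 1) = 0
    rw [← riesz_expand, map_mul, expand_rowPoly, expand_two_monomial, neg_mul, riesz_neg,
      locZero_apply (hrow i) (by rw [mdeg_add]; omega), neg_zero]
  · -- col
    intro j
    apply locZero_of
    intro τ hτ
    show riesz (fun α => zt (α + α)) (colPoly m n ν j * monomial τ 1) = 0
    rw [← riesz_expand, map_mul, expand_colPoly, expand_two_monomial, neg_mul, riesz_neg,
      locZero_apply (hcol j) (by rw [mdeg_add]; omega), neg_zero]
  · -- row * X
    intro i₁ i₂ j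
    apply locZero_of
    intro τ hτ
    show riesz (fun α => zt (α + α)) (rowPoly m n μ i₁ * X (i₂, j) * monomial τ 1) = 0
    rw [← riesz_expand, map_mul, map_mul, expand_rowPoly, expand_X, expand_two_monomial,
      mul_assoc, XX_mono, neg_mul, riesz_neg,
      locZero_apply (hrow i₁)
        (by rw [mdeg_add, mdeg_add, mdeg_add, mdeg_single]; omega), neg_zero]
  · -- col * X
    intro j₁ j₂ i
    apply locZero_of
    intro τ hτ
    show riesz (fun α => zt (α + α)) (colPoly m n ν j₁ * X (i, j₂) * monomial τ 1) = 0
    rw [← riesz_expand, map_mul, map_mul, expand_colPoly, expand_X, expand_two_monomial,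
      mul_assoc, XX_mono, neg_mul, riesz_neg,
      locZero_apply (hcol j₁)
        (by rw [mdeg_add, mdeg_add, mdeg_add, mdeg_single]; omega), neg_zero]

lemma objS_eq_objP (L : Fin m → Fin n → Fin m → Fin n → ℝ)
    (zt : ((Fin m × Fin n) →₀ ℕ) → ℝ) :
    objS m n L (fun α => zt (α + α)) = objP m n L zt := by
  rw [objS, objP]
  apply Finset.sum_congr rfl; intro i _
  apply Finset.sum_congr rfl; intro j _
  apply Finset.sum_congr rfl; intro k _
  apply Finset.sum_congr rfl; intro l _
  congr 1
  show zt _ = zt _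
  congr 1
  rw [single_two, single_two]
  abel

lemma StoP (hr : 0 < r) {z : ((Fin m × Fin n) →₀ ℕ) → ℝ}
    (h : SFeas m n r μ ν z) :
    PFeas m n (2 * r) μ ν (dz z) := by
  refine ⟨?_, ?_, ?_, ?_⟩
  · have h00 := dz_dbl z 0
    rw [add_zero] at h00
    rw [h00]; exact h.1
  · intro p hp
    rw [one_mul]
    apply riesz_dz_sq z r ?_ p hp
    intro E hE p' hp'
    have := h.2.1 E hE p' hp'
    rwa [eI] at this
  · intro i
    apply locZero_of
    intro γ hγ
    rw [riesz_putRow_mul]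
    by_cases hodd : ∃ q, γ q % 2 = 1
    · obtain ⟨q, hq⟩ := hodd
      have hz1 : dz z γ = 0 := dz_of_odd z hq
      have hz2 : ∀ j, dz z (Finsupp.single (i, j) 1 + Finsupp.single (i, j) 1 + γ) = 0 := by
        intro j
        apply dz_of_odd z (q := q)
        rw [Finsupp.add_apply, Finsupp.add_apply]
        omega
      rw [hz1, mul_zero]
      rw [Finset.sum_congr rfl (fun j _ => hz2 j), Finset.sum_const, smul_zero, sub_zero]
    · push_neg at hodd
      have hγd : γ = hf γ + hf γ := by
        ext q
        rw [Finsupp.add_apply, hf_apply]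
        have := hodd q; omega
      obtain ⟨τ, rfl⟩ : ∃ τ, γ = τ + τ := ⟨hf γ, hγd⟩
      have hmτ : mdeg τ ≤ 2 * r - 1 := by
        rw [mdeg_add] at hγ; omega
      have hz2 : ∀ q : Fin m × Fin n, dz z (Finsupp.single q 1 + Finsupp.single q 1 + (τ + τ))
          = z (Finsupp.single q 1 + τ) := by
        intro q
        have hidx : Finsupp.single q 1 + Finsupp.single q 1 + (τ + τ)
            = (Finsupp.single q 1 + τ) + (Finsupp.single q 1 + τ) := by abel
        rw [hidx, dz_dbl]
      rw [dz_dbl, Finset.sum_congr rfl (fun j _ => hz2 (i, j)), row_sum_eq hr h i hmτ, sub_self]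
  · intro j
    apply locZero_of
    intro γ hγ
    rw [riesz_putCol_mul]
    by_cases hodd : ∃ q, γ q % 2 = 1
    · obtain ⟨q, hq⟩ := hodd
      have hz1 : dz z γ = 0 := dz_of_odd z hq
      have hz2 : ∀ i, dz z (Finsupp.single (i, j) 1 + Finsupp.single (i, j) 1 + γ) = 0 := by
        intro i
        apply dz_of_odd z (q := q)
        rw [Finsupp.add_apply, Finsupp.add_apply]
        omega
      rw [hz1, mul_zero]
      rw [Finset.sum_congr rfl (fun i _ => hz2 i), Finset.sum_const, smul_zero, sub_zero]
    · push_neg at hodd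
      have hγd : γ = hf γ + hf γ := by
        ext q
        rw [Finsupp.add_apply, hf_apply]
        have := hodd q; omega
      obtain ⟨τ, rfl⟩ : ∃ τ, γ = τ + τ := ⟨hf γ, hγd⟩
      have hmτ : mdeg τ ≤ 2 * r - 1 := by
        rw [mdeg_add] at hγ; omega
      have hz2 : ∀ q : Fin m × Fin n, dz z (Finsupp.single q 1 + Finsupp.single q 1 + (τ + τ))
          = z (Finsupp.single q 1 + τ) := by
        intro q
        have hidx : Finsupp.single q 1 + Finsupp.single q 1 + (τ + τ)
            = (Finsupp.single q 1 + τ) + (Finsupp.single q 1 + τ) := by abel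
        rw [hidx, dz_dbl]
      rw [dz_dbl, Finset.sum_congr rfl (fun i _ => hz2 (i, j)), col_sum_eq hr h j hmτ, sub_self]

lemma objP_dz (L : Fin m → Fin n → Fin m → Fin n → ℝ)
    (z : ((Fin m × Fin n) →₀ ℕ) → ℝ) :
    objP m n L (dz z) = objS m n L z := by
  rw [objS, objP]
  apply Finset.sum_congr rfl; intro i _
  apply Finset.sum_congr rfl; intro j _
  apply Finset.sum_congr rfl; intro k _
  apply Finset.sum_congr rfl; intro l _
  congr 1
  have hidx : Finsupp.single (i, j) 2 + Finsupp.single (k, l) 2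
      = (Finsupp.single (i, j) 1 + Finsupp.single (k, l) 1)
        + (Finsupp.single (i, j) 1 + Finsupp.single (k, l) 1) := by
    rw [single_two, single_two]; abel
  rw [hidx, dz_dbl]

end translate


section plan
variable {m n r : ℕ} {μ : Fin m → ℝ} {ν : Fin n → ℝ}

noncomputable def zpi (π : Fin m → Fin n → ℝ) : ((Fin m × Fin n) →₀ ℕ) → ℝ :=
  fun α => ∏ q ∈ α.support, (π q.1 q.2) ^ (α q)

lemma riesz_zpi (π : Fin m → Fin n → ℝ) (p : MvPolynomial (Fin m × Fin n) ℝ) :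
    riesz (zpi π) p = eval (fun q => π q.1 q.2) p := by
  rw [eval_eq]
  rfl

lemma zpi_feas (hr : 0 < r) {π : Fin m → Fin n → ℝ}
    (hπ : π ∈ transportPolytope m n μ ν) : SFeas m n r μ ν (zpi π) := by
  obtain ⟨hpos, hrow, hcol⟩ := hπ
  have hrow0 : ∀ i, eval (fun q : Fin m × Fin n => π q.1 q.2) (rowPoly m n μ i) = 0 := by
    intro i
    rw [rowPoly, map_sub, map_sum, eval_C]
    simp only [eval_X]
    rw [hrow i, sub_self]
  have hcol0 : ∀ j, eval (fun q : Fin m × Fin n => π q.1 q.2) (colPoly m n ν j) = 0 := by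
    intro j
    rw [colPoly, map_sub, map_sum, eval_C]
    simp only [eval_X]
    rw [hcol j, sub_self]
  refine ⟨?_, ?_, ?_, ?_, ?_, ?_⟩
  · show zpi π 0 = 1
    simp [zpi]
  · intro I hI p hp
    rw [riesz_zpi, map_mul, map_pow, eI, map_prod]
    apply mul_nonneg
    · apply Finset.prod_nonneg
      intro q _
      rw [eval_X]
      exact hpos q.1 q.2
    · exact sq_nonneg _
  · intro i α β _ _
    rw [riesz_zpi, map_mul, map_mul, hrow0 i, zero_mul, zero_mul]
  · intro j α β _ _
    rw [riesz_zpi, map_mul, map_mul, hcol0 j, zero_mul, zero_mul]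
  · intro i₁ i₂ j α β _ _
    rw [riesz_zpi, map_mul, map_mul, map_mul, hrow0 i₁, zero_mul, zero_mul, zero_mul]
  · intro j₁ j₂ i α β _ _
    rw [riesz_zpi, map_mul, map_mul, map_mul, hcol0 j₁, zero_mul, zero_mul, zero_mul]

lemma zpi_pair (π : Fin m → Fin n → ℝ) (a b : Fin m × Fin n) :
    zpi π (Finsupp.single a 1 + Finsupp.single b 1) = π a.1 a.2 * π b.1 b.2 := by
  have h1 : zpi π (Finsupp.single a 1 + Finsupp.single b 1)
      = riesz (zpi π) (monomial (Finsupp.single a 1 + Finsupp.single b 1) 1) := by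
    rw [riesz_monomial, one_mul]
  rw [h1, ← mono_mul_mono, ← X, ← X, riesz_zpi, map_mul, eval_X, eval_X]

lemma objS_zpi (L : Fin m → Fin n → Fin m → Fin n → ℝ) (π : Fin m → Fin n → ℝ) :
    objS m n L (zpi π) = Lquad m n L π := by
  rw [objS, Lquad]
  apply Finset.sum_congr rfl; intro i _
  apply Finset.sum_congr rfl; intro j _
  apply Finset.sum_congr rfl; intro k _
  apply Finset.sum_congr rfl; intro l _
  rw [zpi_pair]
  ring

end plan


/-- For every positive integer r, val(P-DGW-2r) = val(S-DGW-r), and both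
values are at most DGW. -/
theorem stmt0 (m n r : ℕ) (hm : 0 < m) (hn : 0 < n) (hr : 0 < r)
    (μ : Fin m → ℝ) (ν : Fin n → ℝ) (hμ : IsProbVec μ) (hν : IsProbVec ν)
    (L : Fin m → Fin n → Fin m → Fin n → ℝ) :
    valP m n (2 * r) μ ν L = valS m n r μ ν L ∧
    valP m n (2 * r) μ ν L ≤ DGW m n μ ν L ∧
    valS m n r μ ν L ≤ DGW m n μ ν L := by
  have hsets : {v : ℝ | ∃ z, PFeas m n (2 * r) μ ν z ∧ v = objP m n L z}
      = {v : ℝ | ∃ z, SFeas m n r μ ν z ∧ v = objS m n L z} := by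
    ext v
    constructor
    · rintro ⟨zt, hzt, rfl⟩
      exact ⟨fun α => zt (α + α), PtoS hr hzt, (objS_eq_objP L zt).symm⟩
    · rintro ⟨z, hz, rfl⟩
      exact ⟨dz z, StoP hr hz, (objP_dz L z).symm⟩
  have heq : valP m n (2 * r) μ ν L = valS m n r μ ν L := by
    rw [valP, valS, hsets]
  have hDsub : {v : ℝ | ∃ π ∈ transportPolytope m n μ ν, v = Lquad m n L π}
      ⊆ {v : ℝ | ∃ z, SFeas m n r μ ν z ∧ v = objS m n L z} := by
    rintro v ⟨π, hπ, rfl⟩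
    exact ⟨zpi π, zpi_feas hr hπ, (objS_zpi L π).symm⟩
  have hbdd : BddBelow {v : ℝ | ∃ z, SFeas m n r μ ν z ∧ v = objS m n L z} := by
    refine ⟨-(∑ i, ∑ j, ∑ k, ∑ l, |L i j k l|), ?_⟩
    rintro v ⟨z, hz, rfl⟩
    exact objS_lb hr hμ hz L
  have hDne : {v : ℝ | ∃ π ∈ transportPolytope m n μ ν, v = Lquad m n L π}.Nonempty := by
    refine ⟨Lquad m n L (fun i j => μ i * ν j), fun i j => μ i * ν j, ⟨?_, ?_, ?_⟩, rfl⟩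
    · intro i j; exact mul_nonneg (hμ.1 i) (hν.1 j)
    · intro i; rw [← Finset.mul_sum, hν.2, mul_one]
    · intro j; rw [← Finset.sum_mul, hμ.2, one_mul]
  have hSD : valS m n r μ ν L ≤ DGW m n μ ν L := by
    rw [valS, DGW]
    exact csInf_le_csInf hbdd hDne hDsub
  exact ⟨heq, heq ▸ hSD, hSD⟩
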